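/- A covector on ℝ⁴ is of alignment type III (can be brought to a form with only its boost-weight −1 component nonzero) if and only if it is null: for v : Fin 4 → ℝ, there exists an η-orthogonal matrix Λ such that the components of Λ·v with indices 1, 3, 4 all vanish (only the index-2 component, of boost weight −1, may be nonzero) if and only if Σ_{a,b} η^{ab} v_a v_b = 0. -/

import Mathlib

open Matrix

/-- The null-frame Minkowski metric on `ℝ⁴` as a matrix (indices 0,1,2,3 for 1,2,3,4). -/
noncomputable def etaM : Matrix (Fin 4) (Fin 4) ℝ :=
  Matrix.of fun a b =>
    if (a = 0 ∧ b = 1) ∨ (a = 1 ∧ b = 0) then -1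
    else if (a = 2 ∧ b = 2) ∨ (a = 3 ∧ b = 3) then 1 else 0

/-- Action of a frame-transformation matrix on a covector: `(Λ·v)_a = Σ_b Λ_{ba} v_b`. -/
noncomputable def actCo (Λ : Matrix (Fin 4) (Fin 4) ℝ) (v : Fin 4 → ℝ) : Fin 4 → ℝ :=
  fun a => ∑ b, Λ b a * v b

lemma etaM_sq : etaM * etaM = 1 := by
  ext a b
  fin_cases a <;> fin_cases b <;>
    simp [etaM, Matrix.mul_apply, Fin.sum_univ_four, Matrix.one_apply]

lemma flip_orth (Λ : Matrix (Fin 4) (Fin 4) ℝ) (h : Λᵀ * etaM * Λ = etaM) :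
    Λ * etaM * Λᵀ = etaM := by
  have h1 : (etaM * Λᵀ * etaM) * Λ = 1 := by
    calc (etaM * Λᵀ * etaM) * Λ = etaM * (Λᵀ * etaM * Λ) := by
          simp [Matrix.mul_assoc]
      _ = etaM * etaM := by rw [h]
      _ = 1 := etaM_sq
  have h2 : Λ * (etaM * Λᵀ * etaM) = 1 := mul_eq_one_comm.mp h1
  calc Λ * etaM * Λᵀ = Λ * etaM * Λᵀ * (etaM * etaM) := by rw [etaM_sq]; simp
    _ = (Λ * (etaM * Λᵀ * etaM)) * etaM := by simp [Matrix.mul_assoc]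
    _ = etaM := by rw [h2]; simp

lemma quad_eq (w : Fin 4 → ℝ) :
    (∑ a, ∑ b, etaM a b * w a * w b) = (w ᵥ* etaM) ⬝ᵥ w := by
  simp only [dotProduct, Matrix.vecMul, dotProduct, Finset.sum_mul]
  rw [Finset.sum_comm]
  refine Finset.sum_congr rfl fun a _ => Finset.sum_congr rfl fun b _ => by ring

lemma actCo_eq (Λ : Matrix (Fin 4) (Fin 4) ℝ) (v : Fin 4 → ℝ) :
    actCo Λ v = v ᵥ* Λ := by
  funext a
  simp [actCo, Matrix.vecMul, dotProduct, mul_comm]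

/-- a covector can be brought by an `η`-orthogonal transformation to a form in which
only its boost-weight `−1` component (the index-2 component, here index 1) is nonzero if and only
if it is null. -/
theorem covector_typeIII_iff_null (v : Fin 4 → ℝ) :
    (∃ Λ : Matrix (Fin 4) (Fin 4) ℝ, Λᵀ * etaM * Λ = etaM ∧
      actCo Λ v 0 = 0 ∧ actCo Λ v 2 = 0 ∧ actCo Λ v 3 = 0) ↔
    (∑ a, ∑ b, etaM a b * v a * v b) = 0 := by
  constructor
  · rintro ⟨Λ, hΛ, h0, h2, h3⟩
    set w := actCo Λ v with hw
    have hinv : (∑ a, ∑ b, etaM a b * w a * w b) = (∑ a, ∑ b, etaM a b * v a * v b) := by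
      rw [quad_eq, quad_eq, hw, actCo_eq]
      rw [Matrix.vecMul_vecMul]
      nth_rewrite 2 [← Matrix.mulVec_transpose]
      rw [Matrix.dotProduct_mulVec, Matrix.vecMul_vecMul, flip_orth Λ hΛ]
    rw [← hinv]
    have e0 : w 0 = 0 := h0
    have e2 : w 2 = 0 := h2
    have e3 : w 3 = 0 := h3
    simp [etaM, Fin.sum_univ_four, e0, e2, e3]
  · intro hnull
    have hq : -(v 0 * v 1) - v 1 * v 0 + v 2 * v 2 + v 3 * v 3 = 0 := by
      have := hnull
      simp [etaM, Fin.sum_univ_four] at this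
      linarith
    by_cases h0 : v 0 = 0
    · have h23 : v 2 * v 2 + v 3 * v 3 = 0 := by rw [h0] at hq; linarith
      have h2 : v 2 = 0 := by nlinarith [sq_nonneg (v 2), sq_nonneg (v 3)]
      have h3 : v 3 = 0 := by nlinarith [sq_nonneg (v 2), sq_nonneg (v 3)]
      exact ⟨1, by simp, by simp [actCo, Fin.sum_univ_four, Matrix.one_apply, h0],
        by simp [actCo, Fin.sum_univ_four, Matrix.one_apply, h2],
        by simp [actCo, Fin.sum_univ_four, Matrix.one_apply, h3]⟩
    · set z2 : ℝ := -v 2 / v 0 with hz2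
      set z3 : ℝ := -v 3 / v 0 with hz3
      set hh : ℝ := (z2 ^ 2 + z3 ^ 2) / 2 with hhh
      refine ⟨Matrix.of fun a b =>
        if a = 0 then (if b = 0 then hh else if b = 1 then 1 else if b = 2 then z2 else z3)
        else if a = 1 then (if b = 0 then 1 else 0)
        else if a = 2 then (if b = 0 then z2 else if b = 2 then 1 else 0)
        else (if b = 0 then z3 else if b = 3 then 1 else 0), ?_, ?_, ?_, ?_⟩
      · ext a b
        fin_cases a <;> fin_cases b <;>
          · simp [etaM, Matrix.mul_apply, Fin.sum_univ_four]
            try field_simp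
            try ring
      · simp [actCo, Fin.sum_univ_four, hhh, hz2, hz3]
        field_simp
        linear_combination (-1) * hq
      · simp [actCo, Fin.sum_univ_four, hz2]
        field_simp
        ring
      · simp [actCo, Fin.sum_univ_four, hz3]
        field_simp
        ring
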